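/- Let c > 0, β > 0, m > 0, v₀ with |v₀| < c, and let v solve m v' = -(β²/(2c)) v/(c² - v²) with v(0) = v₀, and y(t) = ∫₀ᵗ v. Then the field gradient profile g_t(x) from the delta-interaction solution satisfies: U_ff(t)/t → β²/(4c) as t → ∞. -/

import Mathlib

open MeasureTheory

lemma ode_aux (c β m : ℝ) (hc : 0 < c) (hβ : 0 < β) (hm : 0 < m)
    (v : ℝ → ℝ)
    (hv : ∀ t ∈ Set.Ici (0:ℝ),
      HasDerivAt v (-(β^2/(2*c)) * (v t / (c^2 - (v t)^2)) / m) t)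
    (h0 : |v 0| < c) :
    (∀ t ≥ (0:ℝ), |v t| ≤ |v 0|) ∧ Filter.Tendsto v Filter.atTop (nhds 0) := by
  have hvc : ContinuousOn v (Set.Ici (0:ℝ)) :=
    fun t ht => (hv t ht).continuousAt.continuousWithinAt
  -- step 1 : |v t| < c for all t ≥ 0
  have hlt : ∀ t ≥ (0:ℝ), |v t| < c := by
    by_contra hcon
    push_neg at hcon
    obtain ⟨t0, ht0, ht0c⟩ := hcon
    set S : Set ℝ := Set.Ici 0 ∩ (fun t => |v t|) ⁻¹' Set.Ici c with hS
    have hSne : S.Nonempty := ⟨t0, ht0, ht0c⟩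
    have hSclosed : IsClosed S :=
      ContinuousOn.preimage_isClosed_of_isClosed (hvc.abs) isClosed_Ici isClosed_Ici
    have hSbdd : BddBelow S := ⟨0, fun x hx => hx.1⟩
    set T := sInf S with hT
    have hTS : T ∈ S := hSclosed.csInf_mem hSne hSbdd
    have hT0 : 0 ≤ T := hTS.1
    have hTne : T ≠ 0 := by
      intro h
      have := hTS.2
      rw [h] at this
      exact absurd this (not_le.mpr h0)
    have hTpos : 0 < T := lt_of_le_of_ne hT0 (Ne.symm hTne)
    have hsmall : ∀ s, 0 ≤ s → s < T → |v s| < c := by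
      intro s hs hsT
      by_contra hge
      exact absurd (csInf_le hSbdd ⟨hs, not_lt.mp hge⟩) (not_le.mpr hsT)
    -- w = v^2 antitone on Icc 0 T
    have hanti : AntitoneOn (fun s => (v s)^2) (Set.Icc 0 T) := by
      apply antitoneOn_of_deriv_nonpos (convex_Icc 0 T)
      · exact ((hvc.mono (Set.Icc_subset_Ici_self)).pow 2)
      · intro s hs
        rw [interior_Icc] at hs
        exact ((hv s (le_of_lt hs.1)).pow 2).differentiableAt.differentiableWithinAt
      · intro s hs
        rw [interior_Icc] at hs
        have hsd := (hv s (le_of_lt hs.1)).pow 2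
        rw [HasDerivAt.deriv (f := fun s => v s ^ 2) hsd]; push_cast
        have habs : |v s| < c := hsmall s (le_of_lt hs.1) hs.2
        have hpos : 0 < c^2 - (v s)^2 := by nlinarith [abs_nonneg (v s), sq_abs (v s)]
        have hne : c^2 - (v s)^2 ≠ 0 := ne_of_gt hpos
        have heq : (2:ℝ) * v s ^ (2-1) * (-(β^2/(2*c)) * (v s / (c^2 - (v s)^2)) / m)
            = -((β^2/c/m) * ((v s)^2/(c^2 - (v s)^2))) := by
          field_simp
          ring
        rw [heq]
        have : 0 ≤ (β^2/c/m) * ((v s)^2/(c^2 - (v s)^2)) := by positivity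
        linarith
    have : (v T)^2 ≤ (v 0)^2 := hanti ⟨le_refl 0, hT0⟩ ⟨hT0, le_refl T⟩ hT0
    have hcT : c ≤ |v T| := hTS.2
    have h1 : c^2 ≤ (v T)^2 := by nlinarith [abs_nonneg (v T), sq_abs (v T)]
    nlinarith [sq_abs (v 0), abs_nonneg (v 0)]
  -- global antitone of w on Ici 0
  have hanti : AntitoneOn (fun s => (v s)^2) (Set.Ici 0) := by
    apply antitoneOn_of_deriv_nonpos (convex_Ici 0) (hvc.pow 2)
    · intro s hs
      rw [interior_Ici] at hs
      exact ((hv s (le_of_lt (Set.mem_Ioi.mp hs))).pow 2).differentiableAt.differentiableWithinAt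
    · intro s hs
      rw [interior_Ici] at hs
      have hsd := (hv s (le_of_lt (Set.mem_Ioi.mp hs))).pow 2
      rw [hsd.deriv]; push_cast
      have habs : |v s| < c := hlt s (le_of_lt (Set.mem_Ioi.mp hs))
      have hpos : 0 < c^2 - (v s)^2 := by nlinarith [abs_nonneg (v s), sq_abs (v s)]
      have heq : (2:ℝ) * v s ^ (2-1) * (-(β^2/(2*c)) * (v s / (c^2 - (v s)^2)) / m)
          = -((β^2/c/m) * ((v s)^2/(c^2 - (v s)^2))) := by
        field_simp
        ring
      rw [heq]
      have : 0 ≤ (β^2/c/m) * ((v s)^2/(c^2 - (v s)^2)) := by positivity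
      linarith
  have hble : ∀ t ≥ (0:ℝ), |v t| ≤ |v 0| := by
    intro t ht
    have h2 : v t ^ 2 ≤ v 0 ^ 2 := hanti (Set.self_mem_Ici) ht ht
    by_contra hgt
    push_neg at hgt
    nlinarith [sq_abs (v t), sq_abs (v 0), abs_nonneg (v t), abs_nonneg (v 0)]
  refine ⟨hble, ?_⟩
  -- w t → 0
  have hwsmall : ∀ ε > (0:ℝ), ∃ T ≥ (0:ℝ), (v T)^2 < ε := by
    intro ε hε
    by_contra hcon
    push_neg at hcon
    set δ := (β^2/c/m) * (ε/c^2) with hδ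
    have hδpos : 0 < δ := by positivity
    have hanti2 : AntitoneOn (fun s => (v s)^2 + δ * s) (Set.Ici 0) := by
      apply antitoneOn_of_deriv_nonpos (convex_Ici 0)
      · exact (hvc.pow 2).add (continuousOn_const.mul continuousOn_id)
      · intro s hs
        rw [interior_Ici] at hs
        have hid : HasDerivAt (fun x : ℝ => δ * x) δ s := by
          simpa using (hasDerivAt_id s).const_mul δ
        exact (((hv s (le_of_lt (Set.mem_Ioi.mp hs))).pow 2).add hid).differentiableAt.differentiableWithinAt
      · intro s hs
        rw [interior_Ici] at hs
        have hid : HasDerivAt (fun x : ℝ => δ * x) δ s := by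
          simpa using (hasDerivAt_id s).const_mul δ
        have hsd := ((hv s (le_of_lt (Set.mem_Ioi.mp hs))).pow 2).add hid
        rw [HasDerivAt.deriv (f := fun s => v s ^ 2 + δ * s) hsd]; push_cast
        have habs : |v s| < c := hlt s (le_of_lt (Set.mem_Ioi.mp hs))
        have hpos : 0 < c^2 - (v s)^2 := by nlinarith [abs_nonneg (v s), sq_abs (v s)]
        have heq : (2:ℝ) * v s ^ (2-1) * (-(β^2/(2*c)) * (v s / (c^2 - (v s)^2)) / m)
            = -((β^2/c/m) * ((v s)^2/(c^2 - (v s)^2))) := by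
          field_simp
          ring
        rw [heq]
        have hge : ε/c^2 ≤ (v s)^2/(c^2 - (v s)^2) := by
          apply div_le_div₀ (sq_nonneg _) (hcon s (le_of_lt (Set.mem_Ioi.mp hs))) hpos
          nlinarith [sq_nonneg (v s)]
        have : δ ≤ (β^2/c/m) * ((v s)^2/(c^2 - (v s)^2)) := by
          rw [hδ]
          apply mul_le_mul_of_nonneg_left hge (by positivity)
        linarith
    set t1 := (v 0)^2 / δ + 1 with ht1
    have ht1pos : (0:ℝ) ≤ t1 := by positivity
    have := hanti2 Set.self_mem_Ici ht1pos ht1pos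
    simp only [mul_zero, add_zero] at this
    have hvt1 : 0 ≤ (v t1)^2 := sq_nonneg _
    have : δ * t1 ≤ (v 0)^2 := by linarith
    rw [ht1] at this
    have hd : δ * ((v 0)^2/δ + 1) = (v 0)^2 + δ := by field_simp
    rw [hd] at this
    linarith
  have hwto : Filter.Tendsto (fun t => (v t)^2) Filter.atTop (nhds 0) := by
    rw [Metric.tendsto_atTop]
    intro ε hε
    obtain ⟨T, hT0, hTε⟩ := hwsmall ε hε
    refine ⟨T, fun n hn => ?_⟩
    have h1 : (v n)^2 ≤ (v T)^2 := hanti (Set.mem_Ici.mpr hT0)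
      (Set.mem_Ici.mpr (le_trans hT0 hn)) hn
    rw [Real.dist_eq, sub_zero, abs_of_nonneg (sq_nonneg _)]
    linarith
  rw [Metric.tendsto_atTop]
  intro ε hε
  rw [Metric.tendsto_atTop] at hwto
  obtain ⟨N, hN⟩ := hwto (ε^2) (by positivity)
  refine ⟨N, fun n hn => ?_⟩
  have := hN n hn
  rw [Real.dist_eq, sub_zero, abs_of_nonneg (sq_nonneg _)] at this
  rw [Real.dist_eq, sub_zero]
  have h2 : |v n|^2 < ε^2 := by rw [sq_abs]; exact this
  exact lt_of_pow_lt_pow_left₀ 2 (le_of_lt hε) h2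

lemma cesaro_aux (L M : ℝ) (f : ℝ → ℝ)
    (hcont : ContinuousOn f (Set.Ici 0))
    (hbd : ∀ τ ≥ (0:ℝ), |f τ| ≤ M)
    (hlim : Filter.Tendsto f Filter.atTop (nhds L)) :
    Filter.Tendsto (fun t => (∫ τ in (0:ℝ)..t, f τ)/t) Filter.atTop (nhds L) := by
  have hint : ∀ a b : ℝ, 0 ≤ a → a ≤ b → IntervalIntegrable f volume a b := by
    intro a b ha hab
    apply ContinuousOn.intervalIntegrable
    apply hcont.mono
    rw [Set.uIcc_of_le hab]
    exact fun x hx => le_trans ha hx.1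
  rw [Metric.tendsto_atTop]
  intro ε hε
  rw [Metric.tendsto_atTop] at hlim
  obtain ⟨T0, hT0⟩ := hlim (ε/3) (by positivity)
  set T := max T0 0 with hT
  have hTnn : (0:ℝ) ≤ T := le_max_right _ _
  have hTbd : ∀ τ ≥ T, |f τ - L| ≤ ε/3 := fun τ hτ =>
    le_of_lt (by rw [← Real.dist_eq]; exact hT0 τ (le_trans (le_max_left _ _) hτ))
  set C := (M + |L|) * T with hC
  have hCnn : 0 ≤ C := by
    have : 0 ≤ M := le_trans (abs_nonneg _) (hbd 0 le_rfl)
    positivity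
  refine ⟨max (max T 1) (3*C/ε + 1), fun t ht => ?_⟩
  have htT : T ≤ t := le_trans (le_trans (le_max_left _ _) (le_max_left _ _)) ht
  have ht1 : (1:ℝ) ≤ t := le_trans (le_trans (le_max_right _ _) (le_max_left _ _)) ht
  have htpos : 0 < t := lt_of_lt_of_le one_pos ht1
  have htC : 3*C/ε + 1 ≤ t := le_trans (le_max_right _ _) ht
  -- split the integral
  have hsplit : ∫ τ in (0:ℝ)..t, (f τ - L) =
      (∫ τ in (0:ℝ)..T, (f τ - L)) + ∫ τ in T..t, (f τ - L) := by
    rw [intervalIntegral.integral_add_adjacent_intervals]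
    · exact (hint 0 T le_rfl hTnn).sub (intervalIntegrable_const)
    · exact (hint T t hTnn htT).sub (intervalIntegrable_const)
  have hb1 : |∫ τ in (0:ℝ)..T, (f τ - L)| ≤ C := by
    have := intervalIntegral.norm_integral_le_of_norm_le_const
      (C := M + |L|) (f := fun τ => f τ - L) (a := 0) (b := T) ?_
    · rw [Real.norm_eq_abs] at this
      calc |∫ τ in (0:ℝ)..T, (f τ - L)| ≤ (M + |L|) * |T - 0| := this
        _ = C := by rw [hC, sub_zero, abs_of_nonneg hTnn]
    · intro x hx
      rw [Set.uIoc_of_le hTnn] at hx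
      rw [Real.norm_eq_abs]
      calc |f x - L| ≤ |f x| + |L| := abs_sub _ _
        _ ≤ M + |L| := by linarith [hbd x (le_of_lt hx.1)]
  have hb2 : |∫ τ in T..t, (f τ - L)| ≤ ε/3 * t := by
    have := intervalIntegral.norm_integral_le_of_norm_le_const
      (C := ε/3) (f := fun τ => f τ - L) (a := T) (b := t) ?_
    · rw [Real.norm_eq_abs] at this
      calc |∫ τ in T..t, (f τ - L)| ≤ ε/3 * |t - T| := this
        _ ≤ ε/3 * t := by
            apply mul_le_mul_of_nonneg_left _ (by positivity)
            rw [abs_of_nonneg (by linarith)]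
            linarith
    · intro x hx
      rw [Set.uIoc_of_le htT] at hx
      rw [Real.norm_eq_abs]
      exact hTbd x (le_of_lt hx.1)
  have hintL : ∫ τ in (0:ℝ)..t, (f τ - L) = (∫ τ in (0:ℝ)..t, f τ) - L * t := by
    rw [intervalIntegral.integral_sub (hint 0 t le_rfl (le_of_lt htpos))
      intervalIntegrable_const]
    simp [mul_comm]
  have hkey : |(∫ τ in (0:ℝ)..t, f τ) - L * t| ≤ C + ε/3 * t := by
    rw [← hintL, hsplit]
    calc |(∫ τ in (0:ℝ)..T, (f τ - L)) + ∫ τ in T..t, (f τ - L)|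
        ≤ |∫ τ in (0:ℝ)..T, (f τ - L)| + |∫ τ in T..t, (f τ - L)| := abs_add_le _ _
      _ ≤ C + ε/3 * t := add_le_add hb1 hb2
  rw [Real.dist_eq]
  have : (∫ τ in (0:ℝ)..t, f τ)/t - L = ((∫ τ in (0:ℝ)..t, f τ) - L * t)/t := by
    field_simp
  rw [this, abs_div, abs_of_pos htpos]
  rw [div_lt_iff₀ htpos]
  have hClt : C < ε/3 * t := by
    have h3 : 3*C/ε < t := by linarith
    rw [div_lt_iff₀ hε] at h3
    nlinarith
  calc |(∫ τ in (0:ℝ)..t, f τ) - L * t| ≤ C + ε/3 * t := hkey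
    _ < ε/3 * t + ε/3 * t := by linarith
    _ ≤ ε * t := by nlinarith

/-- for the self-consistent delta-interaction solution,
`U_ff(t)/t → β²/(4c)` as `t → ∞`. -/
theorem stmt_11 (c β m : ℝ) (hc : 0 < c) (hβ : 0 < β) (hm : 0 < m)
    (v : ℝ → ℝ)
    (hv : ∀ t ∈ Set.Ici (0:ℝ),
      HasDerivAt v (-(β^2/(2*c)) * (v t / (c^2 - (v t)^2)) / m) t)
    (h0 : |v 0| < c)
    (y : ℝ → ℝ) (hy : ∀ t, y t = ∫ s in (0:ℝ)..t, v s)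
    (τf : ℝ → ℝ → ℝ)
    (hτ1 : ∀ t > (0:ℝ), ∀ x ∈ Set.Icc (-(c*t)) (y t),
      τf t x ∈ Set.Icc (0:ℝ) t ∧ x = y (τf t x) - c*(t - τf t x))
    (hτ2 : ∀ t > (0:ℝ), ∀ x ∈ Set.Icc (y t) (c*t),
      τf t x ∈ Set.Icc (0:ℝ) t ∧ x = y (τf t x) + c*(t - τf t x))
    (hτ3 : ∀ t > (0:ℝ), ∀ x, x ∉ Set.Icc (-(c*t)) (c*t) → τf t x = 0)
    (g : ℝ → ℝ → ℝ)
    (hg1 : ∀ t > (0:ℝ), ∀ x ∈ Set.Ioo (-(c*t)) (y t),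
      g t x = (β/(2*c)) * (1/(c + v (τf t x))))
    (hg2 : ∀ t > (0:ℝ), ∀ x ∈ Set.Ioo (y t) (c*t),
      g t x = -((β/(2*c)) * (1/(c - v (τf t x)))))
    (hg3 : ∀ t > (0:ℝ), ∀ x, x ∉ Set.Icc (-(c*t)) (c*t) → g t x = 0) :
    Filter.Tendsto (fun t => ((c^2/2) * ∫ x : ℝ, (g t x)^2) / t)
      Filter.atTop (nhds (β^2/(4*c))) := by
  obtain ⟨hble, hv0⟩ := ode_aux c β m hc hβ hm v hv h0
  have hvc : ContinuousOn v (Set.Ici (0:ℝ)) :=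
    fun t ht => (hv t ht).continuousAt.continuousWithinAt
  set B := |v 0| with hB
  have hBc : B < c := h0
  have hBnn : 0 ≤ B := abs_nonneg _
  have hvint : ∀ a b : ℝ, 0 ≤ a → a ≤ b → IntervalIntegrable v volume a b := by
    intro a b ha hab
    apply ContinuousOn.intervalIntegrable
    apply hvc.mono
    rw [Set.uIcc_of_le hab]
    exact fun x hx => le_trans ha hx.1
  have hy0 : y 0 = 0 := by rw [hy]; simp
  have hydiff : ∀ a b : ℝ, 0 ≤ a → a ≤ b → |y b - y a| ≤ B * (b - a) := by
    intro a b ha hab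
    have h1 : y b - y a = ∫ s in a..b, v s := by
      rw [hy a, hy b]
      exact intervalIntegral.integral_interval_sub_left
        (hvint 0 b le_rfl (le_trans ha hab)) (hvint 0 a le_rfl ha)
    rw [h1]
    have := intervalIntegral.norm_integral_le_of_norm_le_const (C := B)
      (f := v) (a := a) (b := b) ?_
    · rw [Real.norm_eq_abs, abs_of_nonneg (sub_nonneg.mpr hab)] at this
      exact this
    · intro x hx
      rw [Set.uIoc_of_le hab] at hx
      exact hble x (le_trans ha (le_of_lt hx.1))
  have hyd : ∀ τ : ℝ, 0 < τ → HasDerivAt y (v τ) τ := by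
    intro τ hτ
    have hyfun : y = fun s => ∫ s' in (0:ℝ)..s, v s' := funext hy
    rw [hyfun]
    exact intervalIntegral.integral_hasDerivAt_right
      (hvint 0 τ le_rfl (le_of_lt hτ))
      (ContinuousOn.stronglyMeasurableAtFilter isOpen_Ioi
        (hvc.mono (Set.Ioi_subset_Ici le_rfl)) τ hτ)
      (hv τ (le_of_lt hτ)).continuousAt
  -- key computation for fixed t > 0
  have key : ∀ t : ℝ, 0 < t → (∫ x : ℝ, (g t x)^2)
      = (β/(2*c))^2 * ∫ τ in (0:ℝ)..t, (1/(c + v τ) + 1/(c - v τ)) := by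
    intro t ht
    set φ : ℝ → ℝ := fun τ => y τ - c*(t - τ) with hφ
    set ψ : ℝ → ℝ := fun τ => y τ + c*(t - τ) with hψ
    have hφ0 : φ 0 = -(c*t) := by simp [hφ, hy0]
    have hφt : φ t = y t := by simp [hφ]
    have hψ0 : ψ 0 = c*t := by simp [hψ, hy0]
    have hψt : ψ t = y t := by simp [hψ]
    have hφmono : ∀ a b : ℝ, 0 ≤ a → a < b → φ a < φ b := by
      intro a b ha hab
      have h1 := hydiff a b ha (le_of_lt hab)
      have h2 := abs_le.mp h1
      have : φ b - φ a = (y b - y a) + c*(b - a) := by rw [hφ]; ring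
      nlinarith
    have hψanti : ∀ a b : ℝ, 0 ≤ a → a < b → ψ b < ψ a := by
      intro a b ha hab
      have h1 := hydiff a b ha (le_of_lt hab)
      have h2 := abs_le.mp h1
      have : ψ a - ψ b = c*(b - a) - (y b - y a) := by rw [hψ]; ring
      nlinarith
    have hφinj : Set.InjOn φ (Set.Icc 0 t) := by
      intro a ha b hb hab
      rcases lt_trichotomy a b with h | h | h
      · exact absurd hab (ne_of_lt (hφmono a b ha.1 h))
      · exact h
      · exact absurd hab.symm (ne_of_lt (hφmono b a hb.1 h))
    have hψinj : Set.InjOn ψ (Set.Icc 0 t) := by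
      intro a ha b hb hab
      rcases lt_trichotomy a b with h | h | h
      · exact absurd hab.symm (ne_of_lt (hψanti a b ha.1 h))
      · exact h
      · exact absurd hab (ne_of_lt (hψanti b a hb.1 h))
    have hφinjIoo : Set.InjOn φ (Set.Ioo 0 t) :=
      hφinj.mono Set.Ioo_subset_Icc_self
    have hψinjIoo : Set.InjOn ψ (Set.Ioo 0 t) :=
      hψinj.mono Set.Ioo_subset_Icc_self
    have hyt1 : -(c*t) < y t := by
      have h1 := abs_le.mp (by simpa [hy0] using hydiff 0 t le_rfl (le_of_lt ht))
      nlinarith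
    have hyt2 : y t < c*t := by
      have h1 := abs_le.mp (by simpa [hy0] using hydiff 0 t le_rfl (le_of_lt ht))
      nlinarith
    -- image identities
    have hφmem : ∀ τ ∈ Set.Ioo (0:ℝ) t, φ τ ∈ Set.Ioo (-(c*t)) (y t) := by
      intro τ hτ
      constructor
      · have h := hφmono 0 τ le_rfl hτ.1; rwa [hφ0] at h
      · have h := hφmono τ t (le_of_lt hτ.1) hτ.2; rwa [hφt] at h
    have hψmem : ∀ τ ∈ Set.Ioo (0:ℝ) t, ψ τ ∈ Set.Ioo (y t) (c*t) := by
      intro τ hτ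
      constructor
      · have h := hψanti τ t (le_of_lt hτ.1) hτ.2; rwa [hψt] at h
      · have h := hψanti 0 τ le_rfl hτ.1; rwa [hψ0] at h
    have hφim : φ '' (Set.Ioo 0 t) = Set.Ioo (-(c*t)) (y t) := by
      apply Set.Subset.antisymm
      · intro x hx
        obtain ⟨τ, hτ, rfl⟩ := hx
        exact hφmem τ hτ
      · intro x hx
        obtain ⟨hmem, heq⟩ := hτ1 t ht x ⟨le_of_lt hx.1, le_of_lt hx.2⟩
        have hxφ : x = φ (τf t x) := heq
        refine ⟨τf t x, ⟨?_, ?_⟩, hxφ.symm⟩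
        · rcases lt_or_eq_of_le hmem.1 with h | h
          · exact h
          · exfalso; rw [hxφ, ← h, hφ0] at hx; exact lt_irrefl _ hx.1
        · rcases lt_or_eq_of_le hmem.2 with h | h
          · exact h
          · exfalso; rw [hxφ, h, hφt] at hx; exact lt_irrefl _ hx.2
    have hψim : ψ '' (Set.Ioo 0 t) = Set.Ioo (y t) (c*t) := by
      apply Set.Subset.antisymm
      · intro x hx
        obtain ⟨τ, hτ, rfl⟩ := hx
        exact hψmem τ hτ
      · intro x hx
        obtain ⟨hmem, heq⟩ := hτ2 t ht x ⟨le_of_lt hx.1, le_of_lt hx.2⟩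
        have hxψ : x = ψ (τf t x) := heq
        refine ⟨τf t x, ⟨?_, ?_⟩, hxψ.symm⟩
        · rcases lt_or_eq_of_le hmem.1 with h | h
          · exact h
          · exfalso; rw [hxψ, ← h, hψ0] at hx; exact lt_irrefl _ hx.2
        · rcases lt_or_eq_of_le hmem.2 with h | h
          · exact h
          · exfalso; rw [hxψ, h, hψt] at hx; exact lt_irrefl _ hx.1
    -- τf fixed points
    have hτfixφ : ∀ τ ∈ Set.Ioo (0:ℝ) t, τf t (φ τ) = τ := by
      intro τ hτ
      have hx := hφmem τ hτ
      obtain ⟨hmem, heq⟩ := hτ1 t ht (φ τ) ⟨le_of_lt hx.1, le_of_lt hx.2⟩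
      exact hφinj hmem ⟨le_of_lt hτ.1, le_of_lt hτ.2⟩ heq.symm
    have hτfixψ : ∀ τ ∈ Set.Ioo (0:ℝ) t, τf t (ψ τ) = τ := by
      intro τ hτ
      have hx := hψmem τ hτ
      obtain ⟨hmem, heq⟩ := hτ2 t ht (ψ τ) ⟨le_of_lt hx.1, le_of_lt hx.2⟩
      exact hψinj hmem ⟨le_of_lt hτ.1, le_of_lt hτ.2⟩ heq.symm
    -- derivatives
    have hφd : ∀ τ ∈ Set.Ioo (0:ℝ) t, HasDerivWithinAt φ (v τ + c) (Set.Ioo 0 t) τ := by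
      intro τ hτ
      have h2 : HasDerivAt (fun s : ℝ => c*(t - s)) (-c) τ := by
        simpa using ((hasDerivAt_id τ).const_sub t).const_mul c
      have h3 := (hyd τ hτ.1).sub h2
      have h4 : v τ - (-c) = v τ + c := by ring
      rw [h4] at h3
      exact h3.hasDerivWithinAt
    have hψd : ∀ τ ∈ Set.Ioo (0:ℝ) t, HasDerivWithinAt ψ (v τ - c) (Set.Ioo 0 t) τ := by
      intro τ hτ
      have h2 : HasDerivAt (fun s : ℝ => c*(t - s)) (-c) τ := by
        simpa using ((hasDerivAt_id τ).const_sub t).const_mul c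
      have h3 := (hyd τ hτ.1).add h2
      have h4 : v τ + (-c) = v τ - c := by ring
      rw [h4] at h3
      exact h3.hasDerivWithinAt
    -- pointwise bounds on v
    have hvb : ∀ τ ∈ Set.Ioo (0:ℝ) t, -B ≤ v τ ∧ v τ ≤ B :=
      fun τ hτ => abs_le.mp (hble τ (le_of_lt hτ.1))
    have hcvpos : ∀ τ ∈ Set.Ioo (0:ℝ) t, 0 < c + v τ ∧ 0 < c - v τ := by
      intro τ hτ
      obtain ⟨h1, h2⟩ := hvb τ hτ
      constructor <;> linarith
    -- pointwise identity on the left region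
    have hLeq : ∀ τ ∈ Set.Ioo (0:ℝ) t,
        |v τ + c| • (g t (φ τ))^2 = (β/(2*c))^2 * (1/(c + v τ)) := by
      intro τ hτ
      obtain ⟨hp1, hp2⟩ := hcvpos τ hτ
      rw [hg1 t ht (φ τ) (hφmem τ hτ), hτfixφ τ hτ, smul_eq_mul,
        abs_of_pos (by linarith : 0 < v τ + c)]
      field_simp
      ring
    have hReq : ∀ τ ∈ Set.Ioo (0:ℝ) t,
        |v τ - c| • (g t (ψ τ))^2 = (β/(2*c))^2 * (1/(c - v τ)) := by
      intro τ hτ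
      obtain ⟨hp1, hp2⟩ := hcvpos τ hτ
      rw [hg2 t ht (ψ τ) (hψmem τ hτ), hτfixψ τ hτ, smul_eq_mul,
        abs_of_neg (by linarith : v τ - c < 0)]
      field_simp
      ring
    -- continuity of the explicit integrands
    have hvcIcc : ContinuousOn v (Set.Icc 0 t) :=
      hvc.mono (fun x hx => hx.1)
    have hcontL : ContinuousOn (fun τ => (β/(2*c))^2 * (1/(c + v τ))) (Set.Icc 0 t) := by
      apply continuousOn_const.mul
      apply continuousOn_const.div (continuousOn_const.add hvcIcc)
      intro τ hτ
      have := abs_le.mp (hble τ hτ.1)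
      intro h; simp only [Pi.add_apply, Pi.sub_apply] at h; nlinarith [this.1, this.2]
    have hcontR : ContinuousOn (fun τ => (β/(2*c))^2 * (1/(c - v τ))) (Set.Icc 0 t) := by
      apply continuousOn_const.mul
      apply continuousOn_const.div (continuousOn_const.sub hvcIcc)
      intro τ hτ
      have := abs_le.mp (hble τ hτ.1)
      intro h; simp only [Pi.add_apply, Pi.sub_apply] at h; nlinarith [this.1, this.2]
    have hintL : IntegrableOn (fun τ => (β/(2*c))^2 * (1/(c + v τ))) (Set.Ioo 0 t) :=
      (hcontL.integrableOn_Icc).mono_set Set.Ioo_subset_Icc_self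
    have hintR : IntegrableOn (fun τ => (β/(2*c))^2 * (1/(c - v τ))) (Set.Ioo 0 t) :=
      (hcontR.integrableOn_Icc).mono_set Set.Ioo_subset_Icc_self
    -- integrability of g² on each region
    have hImL : IntegrableOn (fun x => (g t x)^2) (Set.Ioo (-(c*t)) (y t)) := by
      rw [← hφim, integrableOn_image_iff_integrableOn_abs_deriv_smul
        measurableSet_Ioo hφd hφinjIoo]
      exact hintL.congr_fun (fun τ hτ => (hLeq τ hτ).symm) measurableSet_Ioo
    have hImR : IntegrableOn (fun x => (g t x)^2) (Set.Ioo (y t) (c*t)) := by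
      rw [← hψim, integrableOn_image_iff_integrableOn_abs_deriv_smul
        measurableSet_Ioo hψd hψinjIoo]
      exact hintR.congr_fun (fun τ hτ => (hReq τ hτ).symm) measurableSet_Ioo
    -- the two set integrals
    have hL : ∫ x in Set.Ioo (-(c*t)) (y t), (g t x)^2
        = ∫ τ in Set.Ioo (0:ℝ) t, (β/(2*c))^2 * (1/(c + v τ)) := by
      rw [← hφim, integral_image_eq_integral_abs_deriv_smul
        measurableSet_Ioo hφd hφinjIoo]
      exact setIntegral_congr_fun measurableSet_Ioo (fun τ hτ => hLeq τ hτ)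
    have hR : ∫ x in Set.Ioo (y t) (c*t), (g t x)^2
        = ∫ τ in Set.Ioo (0:ℝ) t, (β/(2*c))^2 * (1/(c - v τ)) := by
      rw [← hψim, integral_image_eq_integral_abs_deriv_smul
        measurableSet_Ioo hψd hψinjIoo]
      exact setIntegral_congr_fun measurableSet_Ioo (fun τ hτ => hReq τ hτ)
    -- decompose the full integral
    have hae : (fun x => (g t x)^2) =ᵐ[volume]
        (fun x => (Set.Ioo (-(c*t)) (y t)).indicator (fun x => (g t x)^2) x
          + (Set.Ioo (y t) (c*t)).indicator (fun x => (g t x)^2) x) := by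
      have hnull : volume ({-(c*t), y t, c*t} : Set ℝ) = 0 :=
        (Set.toFinite _).measure_zero volume
      rw [Filter.eventuallyEq_iff_exists_mem]
      refine ⟨({-(c*t), y t, c*t} : Set ℝ)ᶜ, ?_, ?_⟩
      · rw [mem_ae_iff, compl_compl]; exact hnull
      · intro x hx
        simp only [Set.mem_compl_iff, Set.mem_insert_iff, Set.mem_singleton_iff] at hx
        push_neg at hx
        obtain ⟨hx1, hx2, hx3⟩ := hx
        by_cases hin : x ∈ Set.Icc (-(c*t)) (c*t)
        · rcases lt_trichotomy x (y t) with h | h | h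
          · have hmem : x ∈ Set.Ioo (-(c*t)) (y t) :=
              ⟨lt_of_le_of_ne hin.1 (Ne.symm hx1), h⟩
            have hnmem : x ∉ Set.Ioo (y t) (c*t) := fun hco => absurd h (not_lt.mpr (le_of_lt hco.1))
            simp [Set.indicator_of_mem hmem, Set.indicator_of_notMem hnmem]
          · exact absurd h hx2
          · have hmem : x ∈ Set.Ioo (y t) (c*t) :=
              ⟨h, lt_of_le_of_ne hin.2 hx3⟩
            have hnmem : x ∉ Set.Ioo (-(c*t)) (y t) := fun hco => absurd h (not_lt.mpr (le_of_lt hco.2))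
            simp [Set.indicator_of_mem hmem, Set.indicator_of_notMem hnmem]
        · have hg0 : g t x = 0 := hg3 t ht x hin
          have hn1 : x ∉ Set.Ioo (-(c*t)) (y t) := by
            intro hco
            exact hin ⟨le_of_lt hco.1, le_trans (le_of_lt hco.2) (le_of_lt hyt2)⟩
          have hn2 : x ∉ Set.Ioo (y t) (c*t) := by
            intro hco
            exact hin ⟨le_trans (le_of_lt hyt1) (le_of_lt hco.1), le_of_lt hco.2⟩
          simp [hg0, Set.indicator_of_notMem hn1, Set.indicator_of_notMem hn2]
    have hsum : (∫ x : ℝ, (g t x)^2)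
        = (∫ x in Set.Ioo (-(c*t)) (y t), (g t x)^2)
          + ∫ x in Set.Ioo (y t) (c*t), (g t x)^2 := by
      rw [integral_congr_ae hae, integral_add
        ((integrable_indicator_iff measurableSet_Ioo).mpr hImL)
        ((integrable_indicator_iff measurableSet_Ioo).mpr hImR),
        integral_indicator measurableSet_Ioo, integral_indicator measurableSet_Ioo]
    -- convert to interval integrals and combine
    rw [hsum, hL, hR,
      intervalIntegral.integral_of_le (le_of_lt ht), integral_Ioc_eq_integral_Ioo,
      ← integral_add hintL hintR, ← integral_const_mul]
    congr 1
    funext τ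
    ring
  -- Cesàro averaging
  have hqcont : ContinuousOn (fun τ => 1/(c + v τ) + 1/(c - v τ)) (Set.Ici 0) := by
    apply ContinuousOn.add
    · apply continuousOn_const.div (continuousOn_const.add hvc)
      intro τ hτ
      have h1 := abs_le.mp (hble τ hτ)
      intro h; simp only [Pi.add_apply, Pi.sub_apply] at h; nlinarith [h1.1, h1.2]
    · apply continuousOn_const.div (continuousOn_const.sub hvc)
      intro τ hτ
      have h1 := abs_le.mp (hble τ hτ)
      intro h; simp only [Pi.add_apply, Pi.sub_apply] at h; nlinarith [h1.1, h1.2]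
  have hqbd : ∀ τ ≥ (0:ℝ), |1/(c + v τ) + 1/(c - v τ)| ≤ 2/(c - B) := by
    intro τ hτ
    obtain ⟨h1, h2⟩ := abs_le.mp (hble τ hτ)
    have hp1 : 0 < c + v τ := by linarith
    have hp2 : 0 < c - v τ := by linarith
    have hcB : 0 < c - B := by linarith
    have e1 : 1/(c + v τ) ≤ 1/(c - B) := one_div_le_one_div_of_le hcB (by linarith)
    have e2 : 1/(c - v τ) ≤ 1/(c - B) := one_div_le_one_div_of_le hcB (by linarith)
    have e0 : 0 ≤ 1/(c + v τ) + 1/(c - v τ) := by positivity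
    rw [abs_of_nonneg e0]
    calc 1/(c + v τ) + 1/(c - v τ) ≤ 1/(c - B) + 1/(c - B) := add_le_add e1 e2
      _ = 2/(c - B) := by ring
  have hqlim : Filter.Tendsto (fun τ => 1/(c + v τ) + 1/(c - v τ))
      Filter.atTop (nhds (2/c)) := by
    have h1 : Filter.Tendsto (fun τ => c + v τ) Filter.atTop (nhds c) := by
      simpa using Filter.Tendsto.add (tendsto_const_nhds (x := c)) hv0
    have h2 : Filter.Tendsto (fun τ => c - v τ) Filter.atTop (nhds c) := by
      simpa using Filter.Tendsto.sub (tendsto_const_nhds (x := c)) hv0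
    have h3 := Filter.Tendsto.div (tendsto_const_nhds (x := (1:ℝ))) h1 (ne_of_gt hc)
    have h4 := Filter.Tendsto.div (tendsto_const_nhds (x := (1:ℝ))) h2 (ne_of_gt hc)
    have h5 := h3.add h4
    have : 1/c + 1/c = 2/c := by ring
    rwa [this] at h5
  have havg := cesaro_aux (2/c) (2/(c - B)) _ hqcont hqbd hqlim
  -- final assembly
  have heq : ∀ᶠ t in Filter.atTop,
      (c^2/2) * (β/(2*c))^2 * ((∫ τ in (0:ℝ)..t, (1/(c + v τ) + 1/(c - v τ)))/t)
      = ((c^2/2) * ∫ x : ℝ, (g t x)^2)/t := by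
    filter_upwards [Filter.eventually_gt_atTop 0] with t ht
    rw [key t ht]
    ring
  have hlim2 := havg.const_mul ((c^2/2) * (β/(2*c))^2)
  have hval : (c^2/2) * (β/(2*c))^2 * (2/c) = β^2/(4*c) := by
    field_simp
    ring
  rw [hval] at hlim2
  exact Filter.Tendsto.congr' heq hlim2
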